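/- Let V be a nonnegative random variable with P[V ≥ s] ≤ 1 ∧ (κ n⁻¹ s^{−α}) for all s > 0, where α ∈ (1, 2), κ > 0 and n ≥ 1. Then E[V ∧ V²] ≤ C n⁻¹, where C depends only on α and κ. -/
import Mathlib


open MeasureTheory ProbabilityTheory

/-- If `P[V ≥ s] ≤ 1 ∧ κ n⁻¹ s^{-α}` with `α ∈ (1,2)`, then
`E[V ∧ V²] ≤ C n⁻¹` where `C` depends only on `α, κ`. -/
theorem stmt9 (α κ : ℝ) (hα : α ∈ Set.Ioo (1 : ℝ) 2) (hκ : 0 < κ) :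
    ∃ C : ℝ, 0 < C ∧
      ∀ (Ω : Type) (_ : MeasureSpace Ω), IsProbabilityMeasure (ℙ : Measure Ω) →
      ∀ (V : Ω → ℝ), Measurable V → (∀ ω, 0 ≤ V ω) →
      ∀ n : ℕ, 1 ≤ n →
      (∀ s : ℝ, 0 < s → (ℙ {ω | s ≤ V ω}).toReal ≤ min 1 (κ * (n : ℝ)⁻¹ * s ^ (-α))) →
      (∫ ω, min (V ω) (V ω ^ 2)) ≤ C * (n : ℝ)⁻¹ := by
  obtain ⟨hα1, hα2⟩ := hα
  have h1 : (0:ℝ) < α - 1 := by linarith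
  have h2 : (0:ℝ) < 2 - α := by linarith
  refine ⟨2 * κ * (1/(2-α) + 1/(α-1)), by positivity, ?_⟩
  intro Ω _ hP V hV hV0 n hn hTail
  have hn0 : (0:ℝ) < (n:ℝ)⁻¹ := by
    have : (0:ℝ) < (n:ℝ) := by exact_mod_cast Nat.lt_of_lt_of_le Nat.zero_lt_one hn
    positivity
  set g : ℝ → ℝ := fun t => 2 * min t 1 with hg
  have gcont : Continuous g := continuous_const.mul (continuous_id.min continuous_const)
  have g_intble : ∀ t > (0:ℝ), IntervalIntegrable g volume 0 t :=
    fun t _ => gcont.intervalIntegrable 0 t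
  have g_nn : ∀ᵐ t ∂volume.restrict (Set.Ioi (0:ℝ)), 0 ≤ g t := by
    filter_upwards [ae_restrict_mem measurableSet_Ioi] with t ht
    have : (0:ℝ) < t := ht
    simp only [hg]
    have : (0:ℝ) ≤ min t 1 := le_min this.le zero_le_one
    linarith
  -- pointwise domination: min v v² ≤ ∫ t in 0..v, g t  for v ≥ 0
  have hdom : ∀ v : ℝ, 0 ≤ v → min v (v^2) ≤ ∫ t in (0:ℝ)..v, g t := by
    intro v hv
    have hint01 : (∫ t in (0:ℝ)..(1:ℝ), g t) = 1 := by
      have : (∫ t in (0:ℝ)..(1:ℝ), g t) = ∫ t in (0:ℝ)..(1:ℝ), 2 * t := by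
        apply intervalIntegral.integral_congr
        intro t ht
        rw [Set.uIcc_of_le zero_le_one] at ht
        simp only [hg]
        rw [min_eq_left ht.2]
      rw [this, intervalIntegral.integral_const_mul, integral_id]; ring
    rcases le_or_gt v 1 with hv1 | hv1
    · have hmin : min v (v^2) = v^2 := by
        rw [min_eq_right]
        nlinarith
      have : (∫ t in (0:ℝ)..v, g t) = ∫ t in (0:ℝ)..v, 2 * t := by
        apply intervalIntegral.integral_congr
        intro t ht
        rw [Set.uIcc_of_le hv] at ht
        simp only [hg]
        rw [min_eq_left (ht.2.trans hv1)]
      rw [hmin, this, intervalIntegral.integral_const_mul, integral_id]; ring_nf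
      nlinarith
    · have hmin : min v (v^2) = v := by
        rw [min_eq_left]
        nlinarith
      have hsplit : (∫ t in (0:ℝ)..(1:ℝ), g t) + (∫ t in (1:ℝ)..v, g t)
          = ∫ t in (0:ℝ)..v, g t :=
        intervalIntegral.integral_add_adjacent_intervals
          (gcont.intervalIntegrable 0 1) (gcont.intervalIntegrable 1 v)
      have hint1v : (∫ t in (1:ℝ)..v, g t) = 2 * (v - 1) := by
        have : (∫ t in (1:ℝ)..v, g t) = ∫ t in (1:ℝ)..v, 2 := by
          apply intervalIntegral.integral_congr
          intro t ht
          rw [Set.uIcc_of_le hv1.le] at ht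
          simp only [hg]
          rw [min_eq_right ht.1]; ring
        rw [this, intervalIntegral.integral_const, smul_eq_mul]; ring
      rw [hmin, ← hsplit, hint01, hint1v]
      linarith
  -- reduce to lintegral
  have hmin_nn : ∀ ω, 0 ≤ min (V ω) (V ω ^ 2) := fun ω => le_min (hV0 ω) (by positivity)
  have heq : (∫ ω, min (V ω) (V ω ^ 2))
      = (∫⁻ ω, ENNReal.ofReal (min (V ω) (V ω ^ 2))).toReal :=
    integral_eq_lintegral_of_nonneg_ae (Filter.Eventually.of_forall hmin_nn)
      ((hV.min (hV.pow_const 2)).aestronglyMeasurable)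
  rw [heq]
  have hCnn : 0 ≤ 2 * κ * (1/(2-α) + 1/(α-1)) * (n:ℝ)⁻¹ := by positivity
  refine ENNReal.toReal_le_of_le_ofReal hCnn ?_
  -- step 1: bound by the layer-cake integrand
  have step1 : (∫⁻ ω, ENNReal.ofReal (min (V ω) (V ω ^ 2)))
      ≤ ∫⁻ ω, ENNReal.ofReal (∫ t in (0:ℝ)..V ω, g t) := by
    apply lintegral_mono
    intro ω
    exact ENNReal.ofReal_le_ofReal (hdom (V ω) (hV0 ω))
  -- step 2: layer cake
  have step2 : (∫⁻ ω, ENNReal.ofReal (∫ t in (0:ℝ)..V ω, g t))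
      = ∫⁻ t in Set.Ioi (0:ℝ), ℙ {a | t ≤ V a} * ENNReal.ofReal (g t) :=
    lintegral_comp_eq_lintegral_meas_le_mul ℙ (Filter.Eventually.of_forall hV0)
      hV.aemeasurable g_intble g_nn
  -- step 3: bound the tail
  have step3 : (∫⁻ t in Set.Ioi (0:ℝ), ℙ {a | t ≤ V a} * ENNReal.ofReal (g t))
      ≤ ∫⁻ t in Set.Ioi (0:ℝ), ENNReal.ofReal (κ * (n:ℝ)⁻¹ * t ^ (-α) * g t) := by
    apply lintegral_mono_ae
    filter_upwards [ae_restrict_mem measurableSet_Ioi, g_nn] with t ht hgt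
    have ht0 : (0:ℝ) < t := ht
    have htail : ℙ {a | t ≤ V a} ≤ ENNReal.ofReal (κ * (n:ℝ)⁻¹ * t ^ (-α)) := by
      have h := hTail t ht0
      have hne : ℙ {a | t ≤ V a} ≠ ⊤ := measure_ne_top _ _
      rw [← ENNReal.ofReal_toReal hne]
      exact ENNReal.ofReal_le_ofReal (h.trans (min_le_right _ _))
    calc ℙ {a | t ≤ V a} * ENNReal.ofReal (g t)
        ≤ ENNReal.ofReal (κ * (n:ℝ)⁻¹ * t ^ (-α)) * ENNReal.ofReal (g t) :=
          mul_le_mul_left htail _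
      _ = ENNReal.ofReal (κ * (n:ℝ)⁻¹ * t ^ (-α) * g t) := by
          rw [← ENNReal.ofReal_mul (by positivity)]
  -- step 4: compute the bounding integral
  have hsplit : Set.Ioc (0:ℝ) 1 ∪ Set.Ioi (1:ℝ) = Set.Ioi (0:ℝ) :=
    Set.Ioc_union_Ioi_eq_Ioi zero_le_one
  have step4 : (∫⁻ t in Set.Ioi (0:ℝ), ENNReal.ofReal (κ * (n:ℝ)⁻¹ * t ^ (-α) * g t))
      ≤ ENNReal.ofReal (2 * κ * (1/(2-α) + 1/(α-1)) * (n:ℝ)⁻¹) := by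
    rw [← hsplit, lintegral_union measurableSet_Ioi (Set.Ioc_disjoint_Ioi le_rfl)]
    have hA : (∫⁻ t in Set.Ioc (0:ℝ) 1, ENNReal.ofReal (κ * (n:ℝ)⁻¹ * t ^ (-α) * g t))
        = ∫⁻ t in Set.Ioc (0:ℝ) 1, ENNReal.ofReal (2 * κ * (n:ℝ)⁻¹ * t ^ (1-α)) := by
      apply lintegral_congr_ae
      filter_upwards [ae_restrict_mem measurableSet_Ioc] with t ht
      have ht0 : (0:ℝ) < t := ht.1
      congr 1
      simp only [hg]
      rw [min_eq_left ht.2]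
      have : t ^ (1-α) = t ^ (-α) * t := by
        rw [show (1:ℝ) - α = -α + 1 by ring, Real.rpow_add_one ht0.ne']
      rw [this]; ring
    have hB : (∫⁻ t in Set.Ioi (1:ℝ), ENNReal.ofReal (κ * (n:ℝ)⁻¹ * t ^ (-α) * g t))
        = ∫⁻ t in Set.Ioi (1:ℝ), ENNReal.ofReal (2 * κ * (n:ℝ)⁻¹ * t ^ (-α)) := by
      apply lintegral_congr_ae
      filter_upwards [ae_restrict_mem measurableSet_Ioi] with t ht
      have ht1 : (1:ℝ) < t := ht
      congr 1
      simp only [hg]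
      rw [min_eq_right ht1.le]; ring
    -- integrability on Ioc 0 1
    have hintA : IntegrableOn (fun t : ℝ => 2 * κ * (n:ℝ)⁻¹ * t ^ (1-α))
        (Set.Ioc (0:ℝ) 1) volume := by
      have : IntegrableOn (fun t : ℝ => t ^ (1-α)) (Set.Ioc (0:ℝ) 1) volume :=
        (intervalIntegrable_iff_integrableOn_Ioc_of_le zero_le_one).mp
          (intervalIntegral.intervalIntegrable_rpow' (by linarith))
      exact this.const_mul _
    have hintB : IntegrableOn (fun t : ℝ => 2 * κ * (n:ℝ)⁻¹ * t ^ (-α))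
        (Set.Ioi (1:ℝ)) volume :=
      (integrableOn_Ioi_rpow_of_lt (by linarith) one_pos).const_mul _
    have hvalA : (∫ t in Set.Ioc (0:ℝ) 1, 2 * κ * (n:ℝ)⁻¹ * t ^ (1-α))
        = 2 * κ * (n:ℝ)⁻¹ * (1/(2-α)) := by
      rw [integral_const_mul _ _,
        ← intervalIntegral.integral_of_le zero_le_one,
        integral_rpow (Or.inl (by linarith))]
      rw [show (1:ℝ) - α + 1 = 2 - α by ring, Real.one_rpow,
        Real.zero_rpow h2.ne']
      ring
    have hvalB : (∫ t in Set.Ioi (1:ℝ), 2 * κ * (n:ℝ)⁻¹ * t ^ (-α))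
        = 2 * κ * (n:ℝ)⁻¹ * (1/(α-1)) := by
      rw [integral_const_mul _ _, integral_Ioi_rpow_of_lt (by linarith) one_pos]
      rw [Real.one_rpow]
      have hne : -α + 1 ≠ 0 := by intro h; linarith
      field_simp
      ring
    rw [hA, hB]
    have hnnA : 0 ≤ᵐ[volume.restrict (Set.Ioc (0:ℝ) 1)]
        (fun t : ℝ => 2 * κ * (n:ℝ)⁻¹ * t ^ (1-α)) := by
      filter_upwards [ae_restrict_mem measurableSet_Ioc] with t ht
      have : (0:ℝ) < t := ht.1
      positivity
    have hnnB : 0 ≤ᵐ[volume.restrict (Set.Ioi (1:ℝ))]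
        (fun t : ℝ => 2 * κ * (n:ℝ)⁻¹ * t ^ (-α)) := by
      filter_upwards [ae_restrict_mem measurableSet_Ioi] with t ht
      have : (0:ℝ) < t := lt_trans one_pos ht
      positivity
    rw [← ofReal_integral_eq_lintegral_ofReal hintA hnnA]
    rw [← ofReal_integral_eq_lintegral_ofReal hintB hnnB]
    rw [hvalA, hvalB, ← ENNReal.ofReal_add (by positivity) (by positivity)]
    exact ENNReal.ofReal_le_ofReal (le_of_eq (by ring))
  calc (∫⁻ ω, ENNReal.ofReal (min (V ω) (V ω ^ 2)))
      ≤ ∫⁻ ω, ENNReal.ofReal (∫ t in (0:ℝ)..V ω, g t) := step1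
    _ = ∫⁻ t in Set.Ioi (0:ℝ), ℙ {a | t ≤ V a} * ENNReal.ofReal (g t) := step2
    _ ≤ ∫⁻ t in Set.Ioi (0:ℝ), ENNReal.ofReal (κ * (n:ℝ)⁻¹ * t ^ (-α) * g t) := step3
    _ ≤ ENNReal.ofReal (2 * κ * (1/(2-α) + 1/(α-1)) * (n:ℝ)⁻¹) := step4
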